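/- Any formula φ of the multi-agent S5 language that is valid at every maximally-consistent base for every set of S5-modal relations 𝔯_A is valid (i.e., valid at every base for every 𝔯_A). -/

import Mathlib

/-- A base rule: a finite set of premiss atoms and a conclusion atom. -/
abbrev Rule := Finset ℕ × ℕ

/-- A base is a collection of base rules. -/
abbrev Base := Set Rule

/-- Derivability of an atom in a base: closure of ∅ under the rules. -/
inductive Deriv (B : Base) : ℕ → Prop where
  | step (L : Finset ℕ) (p : ℕ) (mem : (L, p) ∈ B)
      (prem : ∀ q ∈ L, Deriv B q) : Deriv B p

/-- A base is inconsistent iff every atom is derivable in it. -/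
def Inconsistent (B : Base) : Prop := ∀ p : ℕ, Deriv B p

/-- Formulae of the multi-agent modal language over agents `A`. -/
inductive Form (A : Type) where
  | atom : ℕ → Form A
  | bot  : Form A
  | imp  : Form A → Form A → Form A
  | K    : A → Form A → Form A

/-- Negation abbreviation ¬φ := φ → ⊥. -/
def Form.neg {A : Type} (φ : Form A) : Form A := Form.imp φ Form.bot

/-- Validity at a base given a family of relations on bases. -/
def Valid {A : Type} (R : A → Base → Base → Prop) : Base → Form A → Prop
  | B, .atom p => Deriv B p
  | B, .bot => ∀ p : ℕ, Deriv B p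
  | B, .imp φ ψ => ∀ C : Base, B ⊆ C → Valid R C φ → Valid R C ψ
  | B, .K a φ => ∀ C : Base, R a B C → Valid R C φ

/-- Validity of φ at ℬ from a (nonempty) set of assumptions Γ. -/
def GammaValid {A : Type} (R : A → Base → Base → Prop)
    (Γ : Set (Form A)) (B : Base) (φ : Form A) : Prop :=
  ∀ C : Base, B ⊆ C → (∀ ψ ∈ Γ, Valid R C ψ) → Valid R C φ

def Euclidean {X : Sort*} (r : X → X → Prop) : Prop :=
  ∀ x y z, r x y → r x z → r y z

/-- S5-modal relations on bases. -/
structure S5Rel (r : Base → Base → Prop) : Prop where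
  incon_succ : ∀ B, Inconsistent B →
    (∃ C, r B C ∧ Inconsistent C) ∧ ∀ D, r B D → Inconsistent D
  con_succ : ∀ B, ¬ Inconsistent B → ∀ C, r B C → ¬ Inconsistent C
  zig : ∀ B C, r B C → ∀ D, B ⊆ D → ¬ Inconsistent D → ∃ E, C ⊆ E ∧ r D E
  zag : ∀ B C, r B C → ¬ Inconsistent C → ∀ D, D ⊆ B → ∃ E, E ⊆ C ∧ r D E
  refl : ∀ B, r B B
  trans : ∀ B C D, r B C → r C D → r B D
  eucl : ∀ B C D, r B C → r B D → r C D

/-- Maximally-consistent bases. -/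
def MaxCon (B : Base) : Prop :=
  ¬ Inconsistent B ∧ ∀ δ : Rule, δ ∈ B ∨ Inconsistent (insert δ B)

/-- A formula is valid iff it is valid at every base for every family of S5-modal relations. -/
def ValidAll {A : Type} (φ : Form A) : Prop :=
  ∀ R : A → Base → Base → Prop, (∀ a, S5Rel (R a)) → ∀ B : Base, Valid R B φ

lemma deriv_mono {B C : Base} (hBC : B ⊆ C) {p : ℕ} (h : Deriv B p) : Deriv C p := by
  induction h with
  | step L p mem prem ih => exact Deriv.step L p (hBC mem) ih

lemma incon_mono {B C : Base} (hBC : B ⊆ C) (h : Inconsistent B) : Inconsistent C :=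
  fun p => deriv_mono hBC (h p)

lemma s5_symm {r : Base → Base → Prop} (hr : S5Rel r) {B C : Base} (h : r B C) : r C B :=
  hr.eucl B C B h (hr.refl B)

/-- Any derivation uses only finitely many rules. -/
lemma deriv_finite {B : Base} {p : ℕ} (h : Deriv B p) :
    ∃ S : Finset Rule, ↑S ⊆ B ∧ Deriv (↑S : Base) p := by
  induction h with
  | step L p mem prem ih =>
    choose f hf1 hf2 using ih
    refine ⟨insert (L, p) (L.attach.biUnion fun q => f q.1 q.2), ?_, ?_⟩
    · intro δ hδ
      simp only [Finset.coe_insert, Set.mem_insert_iff, Finset.coe_biUnion,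
        Finset.mem_coe, Finset.mem_attach, Set.iUnion_true, Set.mem_iUnion] at hδ
      rcases hδ with rfl | ⟨q, hq⟩
      · exact mem
      · exact hf1 q.1 q.2 hq
    · refine Deriv.step L p (by simp) ?_
      intro q hq
      refine deriv_mono ?_ (hf2 q hq)
      intro δ hδ
      simp only [Finset.coe_insert, Set.mem_insert_iff, Finset.coe_biUnion,
        Finset.mem_coe, Finset.mem_attach, Set.iUnion_true, Set.mem_iUnion]
      exact Or.inr ⟨⟨q, hq⟩, hδ⟩

/-- A finite set contained in the union of a nonempty chain lies in one element. -/
lemma finset_subset_chain {c : Set Base} (hc : IsChain (· ⊆ ·) c) (hne : c.Nonempty)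
    (S : Finset Rule) (hS : ↑S ⊆ ⋃₀ c) : ∃ C ∈ c, ↑S ⊆ C := by
  classical
  induction S using Finset.induction with
  | empty => exact ⟨hne.choose, hne.choose_spec, by simp⟩
  | insert _ _ hδ ih =>
    rename_i δ S
    obtain ⟨C, hCc, hSC⟩ := ih (by
      intro x hx; exact hS (by simp [Finset.mem_insert]; exact Or.inr hx))
    have hd : (δ : Rule) ∈ ⋃₀ c := hS (by simp)
    obtain ⟨D, hDc, hδD⟩ := hd
    rcases eq_or_ne C D with rfl | hne'
    · exact ⟨C, hCc, by
        intro x hx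
        simp only [Finset.coe_insert, Set.mem_insert_iff] at hx
        rcases hx with rfl | hx
        · exact hδD
        · exact hSC hx⟩
    · rcases hc hCc hDc hne' with h | h
      · exact ⟨D, hDc, by
          intro x hx
          simp only [Finset.coe_insert, Set.mem_insert_iff] at hx
          rcases hx with rfl | hx
          · exact hδD
          · exact h (hSC hx)⟩
      · exact ⟨C, hCc, by
          intro x hx
          simp only [Finset.coe_insert, Set.mem_insert_iff] at hx
          rcases hx with rfl | hx
          · exact h hδD
          · exact hSC hx⟩

lemma deriv_sUnion_chain {c : Set Base} (hc : IsChain (· ⊆ ·) c) (hne : c.Nonempty)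
    {p : ℕ} (h : Deriv (⋃₀ c) p) : ∃ C ∈ c, Deriv C p := by
  obtain ⟨S, hS, hd⟩ := deriv_finite h
  obtain ⟨C, hCc, hSC⟩ := finset_subset_chain hc hne S hS
  exact ⟨C, hCc, deriv_mono hSC hd⟩

/-- Adding all rules with premiss {p} does not enable deriving p. -/
lemma deriv_aux {B : Base} {p : ℕ} :
    ∀ r, Deriv (B ∪ {δ : Rule | δ.1 = {p}}) r → Deriv B p ∨ Deriv B r := by
  intro r h
  induction h with
  | step L r mem prem ih =>
    rcases mem with hB | hS
    · by_cases hcase : ∃ q ∈ L, Deriv B p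
      · exact Or.inl hcase.choose_spec.2
      · push_neg at hcase
        refine Or.inr (Deriv.step L r hB ?_)
        intro q hq
        rcases ih q hq with h1 | h1
        · exact absurd h1 (hcase q hq)
        · exact h1
    · have hL : L = {p} := hS
      have : p ∈ L := by rw [hL]; simp
      rcases ih p this with h1 | h1 <;> exact Or.inl h1

/-- Any base not deriving p extends to a maximally consistent base not deriving p. -/
lemma exists_maxcon {B : Base} {p : ℕ} (h : ¬ Deriv B p) :
    ∃ C, B ⊆ C ∧ MaxCon C ∧ ¬ Deriv C p := by
  classical
  set B' : Base := B ∪ {δ : Rule | δ.1 = {p}} with hB'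
  have hB'p : ¬ Deriv B' p := by
    intro hd
    rcases deriv_aux p hd with h1 | h1 <;> exact h h1
  have hzorn := zorn_subset_nonempty {C : Base | B' ⊆ C ∧ ¬ Deriv C p} ?_ B' ⟨Set.Subset.rfl, hB'p⟩
  · obtain ⟨m, hB'm, hmS, hmax⟩ := hzorn
    refine ⟨m, fun δ hδ => hmS.1 (Or.inl hδ), ⟨?_, ?_⟩, hmS.2⟩
    · intro hinc
      exact hmS.2 (hinc p)
    · intro δ
      by_cases hδ : δ ∈ m
      · exact Or.inl hδ
      · refine Or.inr ?_
        have hsub : m ⊆ insert δ m := Set.subset_insert δ m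
        have hins : ¬ (B' ⊆ insert δ m ∧ ¬ Deriv (insert δ m) p) := by
          intro hmem
          exact hδ (hmax hmem hsub (Set.mem_insert δ m))
        push_neg at hins
        have hdp : Deriv (insert δ m) p :=
          hins (hmS.1.trans hsub)
        intro q
        have hrule : (({p} : Finset ℕ), q) ∈ insert δ m :=
          hsub (hmS.1 (Or.inr rfl))
        refine Deriv.step {p} q hrule ?_
        intro r hr
        have : r = p := by simpa using hr
        subst this
        exact hdp
  · intro c hcS hc hne
    refine ⟨⋃₀ c, ⟨?_, ?_⟩, fun s hs => Set.subset_sUnion_of_mem hs⟩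
    · obtain ⟨C, hC⟩ := hne
      exact (hcS hC).1.trans (Set.subset_sUnion_of_mem hC)
    · intro hd
      obtain ⟨C, hCc, hdC⟩ := deriv_sUnion_chain hc hne hd
      exact (hcS hCc).2 hdC

/-- Any consistent base extends to a maximally consistent base. -/
lemma exists_maxcon_of_con {B : Base} (h : ¬ Inconsistent B) :
    ∃ C, B ⊆ C ∧ MaxCon C := by
  simp only [Inconsistent, not_forall] at h
  obtain ⟨p, hp⟩ := h
  obtain ⟨C, hBC, hC, _⟩ := exists_maxcon hp
  exact ⟨C, hBC, hC⟩

/-- Inconsistent bases validate every formula. -/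
lemma valid_of_incon {A : Type} {R : A → Base → Base → Prop} (hR : ∀ a, S5Rel (R a))
    (φ : Form A) : ∀ B : Base, Inconsistent B → Valid R B φ := by
  induction φ with
  | atom p => intro B h; exact h p
  | bot => intro B h; exact h
  | imp φ ψ ihφ ihψ =>
    intro B h C hBC _
    exact ihψ C (incon_mono hBC h)
  | K a φ ih =>
    intro B h C hBC
    exact ih C (((hR a).incon_succ B h).2 C hBC)

/-- Validity is monotone with respect to base extension. -/
lemma valid_mono {A : Type} {R : A → Base → Base → Prop} (hR : ∀ a, S5Rel (R a))
    (φ : Form A) : ∀ B C : Base, B ⊆ C → Valid R B φ → Valid R C φ := by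
  induction φ with
  | atom p => intro B C hBC h; exact deriv_mono hBC h
  | bot => intro B C hBC h; exact fun p => deriv_mono hBC (h p)
  | imp φ ψ ihφ ihψ =>
    intro B C hBC h D hCD hφ
    exact h D (hBC.trans hCD) hφ
  | K a φ ih =>
    intro B C hBC h E hCE
    by_cases hC : Inconsistent C
    · exact valid_of_incon hR φ E (((hR a).incon_succ C hC).2 E hCE)
    · have hE : ¬ Inconsistent E := (hR a).con_succ C hC E hCE
      obtain ⟨E', hE'E, hBE'⟩ := (hR a).zag C E hCE hE B hBC
      exact ih E' E hE'E (h E' hBE')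

/-- Non-validity propagates to some maximally consistent extension. -/
lemma propagate {A : Type} {R : A → Base → Base → Prop} (hR : ∀ a, S5Rel (R a))
    (φ : Form A) : ∀ B : Base, ¬ Valid R B φ →
      ∃ C, B ⊆ C ∧ MaxCon C ∧ ¬ Valid R C φ := by
  induction φ with
  | atom p =>
    intro B h
    obtain ⟨C, hBC, hC, hp⟩ := exists_maxcon h
    exact ⟨C, hBC, hC, hp⟩
  | bot =>
    intro B h
    obtain ⟨C, hBC, hC⟩ := exists_maxcon_of_con h
    exact ⟨C, hBC, hC, hC.1⟩
  | imp φ ψ ihφ ihψ =>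
    intro B h
    simp only [Valid, not_forall] at h
    obtain ⟨C, hBC, hφ, hψ⟩ := h
    obtain ⟨D, hCD, hD, hψD⟩ := ihψ C hψ
    refine ⟨D, hBC.trans hCD, hD, ?_⟩
    intro hval
    exact hψD (hval D Set.Subset.rfl (valid_mono hR φ C D hCD hφ))
  | K a φ ih =>
    intro B h
    simp only [Valid, not_forall] at h
    obtain ⟨C, hBC, hφC⟩ := h
    have hBcon : ¬ Inconsistent B := by
      intro hinc
      exact hφC (valid_of_incon hR φ C (((hR a).incon_succ B hinc).2 C hBC))
    have hCcon : ¬ Inconsistent C := (hR a).con_succ B hBcon C hBC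
    obtain ⟨C', hCC', hC', hφC'⟩ := ih C hφC
    -- r C B by symmetry; zig to get E ⊇ B with r C' E, so r E C'
    have hCB : R a C B := s5_symm (hR a) hBC
    obtain ⟨E, hBE, hC'E⟩ := (hR a).zig C B hCB C' hCC' hC'.1
    have hEC' : R a E C' := s5_symm (hR a) hC'E
    have hEcon : ¬ Inconsistent E := (hR a).con_succ C' hC'.1 E hC'E
    obtain ⟨D, hED, hD⟩ := exists_maxcon_of_con hEcon
    obtain ⟨F, hC'F, hDF⟩ := (hR a).zig E C' hEC' D hED hD.1
    have hFcon : ¬ Inconsistent F := (hR a).con_succ D hD.1 F hDF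
    have hFC' : F = C' := by
      apply Set.Subset.antisymm _ hC'F
      intro δ hδF
      by_contra hδ
      rcases hC'.2 δ with h1 | h1
      · exact hδ h1
      · exact hFcon (incon_mono (Set.insert_subset hδF hC'F) h1)
    refine ⟨D, hBE.trans hED, hD, ?_⟩
    intro hval
    exact hφC' (hval C' (hFC' ▸ hDF))

/-- A formula valid at all maximally-consistent bases (for all S5 relation families) is valid. -/
theorem stmt5 {A : Type} (φ : Form A)
    (h : ∀ (R : A → Base → Base → Prop), (∀ a, S5Rel (R a)) →
      ∀ B : Base, MaxCon B → Valid R B φ) :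
    ValidAll φ := by
  intro R hR B
  by_contra hval
  obtain ⟨C, _, hC, hφC⟩ := propagate hR φ B hval
  exact hφC (h R hR C hC)
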